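/- Let G = C_{pq} with p, q distinct primes, with subgroups e, P, Q, G of orders 1, p, q, pq. If a covariant functor 𝒜 : 𝒪_G → grVec_ℚ satisfies Property I (the structure maps 𝒜(G/P) → 𝒜(G/G) and 𝒜(G/Q) → 𝒜(G/G) are surjective, and the induced map 𝒜(G/e) → 𝒦 into the pullback 𝒦 of 𝒜(G/P) → 𝒜(G/G) ← 𝒜(G/Q) is surjective), then 𝒜 is an injective object in the category Vec*_G of covariant functors 𝒪_G → grVec_ℚ. -/

import Mathlib

open Function

/-- A diagram of graded `ℚ`-vector spaces over the orbit category `𝒪_{C_p}`: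
a graded vector space at each of the two orbits `G/e`, `G/G`, a structure map,
and the Weyl group action of `C_p` at the level `G/e`. -/
structure CpSys (p : ℕ) where
  Me : ℕ → Type
  MG : ℕ → Type
  [iMe : ∀ n, AddCommGroup (Me n)]
  [mMe : ∀ n, Module ℚ (Me n)]
  [iMG : ∀ n, AddCommGroup (MG n)]
  [mMG : ∀ n, Module ℚ (MG n)]
  f : ∀ n, Me n →ₗ[ℚ] MG n
  act : ∀ n, ZMod p → (Me n →ₗ[ℚ] Me n)
  act_zero : ∀ n x, act n 0 x = x
  act_add : ∀ n g h x, act n (g + h) x = act n g (act n h x)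
  equiv : ∀ n g x, f n (act n g x) = f n x

attribute [instance] CpSys.iMe CpSys.mMe CpSys.iMG CpSys.mMG

/-- A morphism of diagrams over `𝒪_{C_p}`. -/
structure CpHom {p : ℕ} (X Y : CpSys p) where
  he : ∀ n, X.Me n →ₗ[ℚ] Y.Me n
  hG : ∀ n, X.MG n →ₗ[ℚ] Y.MG n
  comm : ∀ n x, Y.f n (he n x) = hG n (X.f n x)
  act_comm : ∀ n g x, Y.act n g (he n x) = he n (X.act n g x)

/-- A morphism of diagrams is a monomorphism iff it is levelwise injective. -/
def CpHom.Mono {p : ℕ} {X Y : CpSys p} (i : CpHom X Y) : Prop :=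
  (∀ n, Injective (i.he n)) ∧ (∀ n, Injective (i.hG n))

/-- Injectivity of an object of `Vec*_{C_p}`: every morphism into it extends
along every monomorphism. -/
def CpSys.InjectiveObj {p : ℕ} (I : CpSys p) : Prop :=
  ∀ (X Y : CpSys p) (i : CpHom X Y), i.Mono → ∀ f : CpHom X I,
    ∃ g : CpHom Y I,
      (∀ n x, g.he n (i.he n x) = f.he n x) ∧
      (∀ n x, g.hG n (i.hG n x) = f.hG n x)

/-- A diagram of graded `ℚ`-vector spaces over the orbit category `𝒪_{C_{pq}}`:
graded vector spaces at the orbits `G/e`, `G/P`, `G/Q`, `G/G` (where `P`, `Q`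
are the subgroups of order `p`, `q`), structure maps, and the Weyl group
actions (`G` on the `G/e` level, `G/P ≅ C_q` on the `G/P` level and
`G/Q ≅ C_p` on the `G/Q` level). -/
structure CpqSys (p q : ℕ) where
  Me : ℕ → Type
  MP : ℕ → Type
  MQ : ℕ → Type
  MG : ℕ → Type
  [iMe : ∀ n, AddCommGroup (Me n)]
  [mMe : ∀ n, Module ℚ (Me n)]
  [iMP : ∀ n, AddCommGroup (MP n)]
  [mMP : ∀ n, Module ℚ (MP n)]
  [iMQ : ∀ n, AddCommGroup (MQ n)]
  [mMQ : ∀ n, Module ℚ (MQ n)]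
  [iMG : ∀ n, AddCommGroup (MG n)]
  [mMG : ∀ n, Module ℚ (MG n)]
  fEP : ∀ n, Me n →ₗ[ℚ] MP n
  fEQ : ∀ n, Me n →ₗ[ℚ] MQ n
  fPG : ∀ n, MP n →ₗ[ℚ] MG n
  fQG : ∀ n, MQ n →ₗ[ℚ] MG n
  comm : ∀ n x, fPG n (fEP n x) = fQG n (fEQ n x)
  acte : ∀ n, ZMod (p * q) → (Me n →ₗ[ℚ] Me n)
  actP : ∀ n, ZMod q → (MP n →ₗ[ℚ] MP n)
  actQ : ∀ n, ZMod p → (MQ n →ₗ[ℚ] MQ n)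
  acte_zero : ∀ n x, acte n 0 x = x
  acte_add : ∀ n g h x, acte n (g + h) x = acte n g (acte n h x)
  actP_zero : ∀ n x, actP n 0 x = x
  actP_add : ∀ n g h x, actP n (g + h) x = actP n g (actP n h x)
  actQ_zero : ∀ n x, actQ n 0 x = x
  actQ_add : ∀ n g h x, actQ n (g + h) x = actQ n g (actQ n h x)
  equivEP : ∀ n g x,
    fEP n (acte n g x) = actP n (ZMod.castHom (dvd_mul_left q p) (ZMod q) g) (fEP n x)
  equivEQ : ∀ n g x,
    fEQ n (acte n g x) = actQ n (ZMod.castHom (dvd_mul_right p q) (ZMod p) g) (fEQ n x)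
  equivPG : ∀ n g x, fPG n (actP n g x) = fPG n x
  equivQG : ∀ n g x, fQG n (actQ n g x) = fQG n x

attribute [instance] CpqSys.iMe CpqSys.mMe CpqSys.iMP CpqSys.mMP
attribute [instance] CpqSys.iMQ CpqSys.mMQ CpqSys.iMG CpqSys.mMG

/-- A morphism of diagrams over `𝒪_{C_{pq}}`. -/
structure CpqHom {p q : ℕ} (X Y : CpqSys p q) where
  he : ∀ n, X.Me n →ₗ[ℚ] Y.Me n
  hP : ∀ n, X.MP n →ₗ[ℚ] Y.MP n
  hQ : ∀ n, X.MQ n →ₗ[ℚ] Y.MQ n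
  hG : ∀ n, X.MG n →ₗ[ℚ] Y.MG n
  commEP : ∀ n x, Y.fEP n (he n x) = hP n (X.fEP n x)
  commEQ : ∀ n x, Y.fEQ n (he n x) = hQ n (X.fEQ n x)
  commPG : ∀ n x, Y.fPG n (hP n x) = hG n (X.fPG n x)
  commQG : ∀ n x, Y.fQG n (hQ n x) = hG n (X.fQG n x)
  acte_comm : ∀ n g x, Y.acte n g (he n x) = he n (X.acte n g x)
  actP_comm : ∀ n g x, Y.actP n g (hP n x) = hP n (X.actP n g x)
  actQ_comm : ∀ n g x, Y.actQ n g (hQ n x) = hQ n (X.actQ n g x)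

/-- Levelwise injectivity (= monomorphism in the diagram category). -/
def CpqHom.Mono {p q : ℕ} {X Y : CpqSys p q} (i : CpqHom X Y) : Prop :=
  (∀ n, Injective (i.he n)) ∧ (∀ n, Injective (i.hP n)) ∧
    (∀ n, Injective (i.hQ n)) ∧ (∀ n, Injective (i.hG n))

/-- Injectivity of an object of `Vec*_{C_{pq}}`. -/
def CpqSys.InjectiveObj {p q : ℕ} (I : CpqSys p q) : Prop :=
  ∀ (X Y : CpqSys p q) (i : CpqHom X Y), i.Mono → ∀ f : CpqHom X I,
    ∃ g : CpqHom Y I,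
      (∀ n x, g.he n (i.he n x) = f.he n x) ∧
      (∀ n x, g.hP n (i.hP n x) = f.hP n x) ∧
      (∀ n x, g.hQ n (i.hQ n x) = f.hQ n x) ∧
      (∀ n x, g.hG n (i.hG n x) = f.hG n x)

/-- **Property I**: the two structure maps into the `G/G`-level are surjective,
and the induced map from the `G/e`-level into the pullback
`𝒦 = 𝒜(G/P) ×_{𝒜(G/G)} 𝒜(G/Q)` is surjective. -/
def CpqSys.PropertyI {p q : ℕ} (A : CpqSys p q) : Prop :=
  (∀ n, Surjective (A.fPG n)) ∧ (∀ n, Surjective (A.fQG n)) ∧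
    (∀ n (a : A.MP n) (b : A.MQ n), A.fPG n a = A.fQG n b →
      ∃ x : A.Me n, A.fEP n x = a ∧ A.fEQ n x = b)

section Avg

variable {m : ℕ} [NeZero m] {S T W V : Type*} [AddCommGroup S] [Module ℚ S]
  [AddCommGroup T] [Module ℚ T] [AddCommGroup W] [Module ℚ W]
  [AddCommGroup V] [Module ℚ V]

noncomputable def avg (aS : ZMod m → S →ₗ[ℚ] S) (aT : ZMod m → T →ₗ[ℚ] T)
    (F : S →ₗ[ℚ] T) : S →ₗ[ℚ] T :=
  ((m : ℚ)⁻¹) • ∑ g : ZMod m, (aT g).comp (F.comp (aS (-g)))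

theorem avg_apply (aS : ZMod m → S →ₗ[ℚ] S) (aT : ZMod m → T →ₗ[ℚ] T)
    (F : S →ₗ[ℚ] T) (y : S) :
    avg aS aT F y = (m : ℚ)⁻¹ • ∑ g : ZMod m, aT g (F (aS (-g) y)) := by
  simp [avg, LinearMap.sum_apply]

theorem avg_equivariant (aS : ZMod m → S →ₗ[ℚ] S) (aT : ZMod m → T →ₗ[ℚ] T)
    (haS_add : ∀ g h x, aS (g + h) x = aS g (aS h x))
    (haT_add : ∀ g h x, aT (g + h) x = aT g (aT h x))
    (F : S →ₗ[ℚ] T) (h : ZMod m) (y : S) :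
    avg aS aT F (aS h y) = aT h (avg aS aT F y) := by
  rw [avg_apply, avg_apply, map_smul, map_sum]
  congr 1
  refine Fintype.sum_equiv (Equiv.addLeft h).symm _ _ (fun g => ?_)
  show aT g (F (aS (-g) (aS h y))) = aT h (aT (-h + g) (F (aS (-(-h + g)) y)))
  rw [← haT_add, ← haS_add]
  have e1 : h + (-h + g) = g := by ring
  have e2 : -g + h = -(-h + g) := by ring
  rw [e1, e2]

theorem avg_eq_self (aS : ZMod m → S →ₗ[ℚ] S) (aT : ZMod m → T →ₗ[ℚ] T)
    (haT_zero : ∀ x, aT 0 x = x)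
    (haT_add : ∀ g h x, aT (g + h) x = aT g (aT h x))
    (F : S →ₗ[ℚ] T) (y : S)
    (hy : ∀ g : ZMod m, F (aS g y) = aT g (F y)) :
    avg aS aT F y = F y := by
  rw [avg_apply]
  have h1 : ∀ g : ZMod m, aT g (F (aS (-g) y)) = F y := fun g => by
    rw [hy, ← haT_add, add_neg_cancel, haT_zero]
  simp only [h1, Finset.sum_const, Finset.card_univ, ZMod.card]
  rw [← Nat.cast_smul_eq_nsmul ℚ, smul_smul, inv_mul_cancel₀, one_smul]
  exact Nat.cast_ne_zero.2 (NeZero.ne m)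

theorem avg_comp_left (aS : ZMod m → S →ₗ[ℚ] S) (aT : ZMod m → T →ₗ[ℚ] T)
    (aW : ZMod m → W →ₗ[ℚ] W) (π : T →ₗ[ℚ] W)
    (hπ : ∀ g t, π (aT g t) = aW g (π t)) (F : S →ₗ[ℚ] T) (y : S) :
    π (avg aS aT F y) = avg aS aW (π.comp F) y := by
  rw [avg_apply, avg_apply, map_smul, map_sum]
  simp [hπ]

theorem extend_equivariant (aS : ZMod m → S →ₗ[ℚ] S) (aT : ZMod m → T →ₗ[ℚ] T)
    (aV : ZMod m → V →ₗ[ℚ] V)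
    (haT_add : ∀ g h x, aT (g + h) x = aT g (aT h x))
    (haV_zero : ∀ x, aV 0 x = x)
    (haV_add : ∀ g h x, aV (g + h) x = aV g (aV h x))
    (i : S →ₗ[ℚ] T) (hi_inj : Injective i)
    (hi : ∀ g x, aT g (i x) = i (aS g x))
    (F : S →ₗ[ℚ] V)
    (hF : ∀ g x, F (aS g x) = aV g (F x)) :
    ∃ G : T →ₗ[ℚ] V, (∀ g y, G (aT g y) = aV g (G y)) ∧ ∀ x, G (i x) = F x := by
  obtain ⟨r, hr⟩ := i.exists_leftInverse_of_injective (LinearMap.ker_eq_bot.2 hi_inj)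
  have hri : ∀ x, r (i x) = x := fun x => DFunLike.congr_fun hr x
  refine ⟨avg aT aV (F.comp r), fun g y => avg_equivariant aT aV haT_add haV_add _ g y, fun x => ?_⟩
  have h1 : avg aT aV (F.comp r) (i x) = (F.comp r) (i x) := by
    refine avg_eq_self aT aV haV_zero haV_add _ _ (fun g => ?_)
    rw [LinearMap.comp_apply, hi, hri, LinearMap.comp_apply, hri, hF]
  rw [h1, LinearMap.comp_apply, hri]

end Avg

/-- For `G = C_{pq}` with `p, q` distinct primes, a diagram of
graded `ℚ`-vector spaces over `𝒪_G` satisfying Property I is an injective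
object of `Vec*_G`. -/
theorem propertyI_implies_injective {p q : ℕ} (hp : p.Prime) (hq : q.Prime)
    (hpq : p ≠ q) (A : CpqSys p q) (hA : A.PropertyI) : A.InjectiveObj := by
  intro X Y i hi f
  obtain ⟨hiE, hiP, hiQ, hiG⟩ := hi
  obtain ⟨hPG, hQG, hK⟩ := hA
  haveI : NeZero p := ⟨hp.pos.ne'⟩
  haveI : NeZero q := ⟨hq.pos.ne'⟩
  haveI : NeZero (p * q) := ⟨Nat.mul_ne_zero hp.pos.ne' hq.pos.ne'⟩
  have key : ∀ n, ∃ (gE : Y.Me n →ₗ[ℚ] A.Me n) (gP : Y.MP n →ₗ[ℚ] A.MP n)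
      (gQ : Y.MQ n →ₗ[ℚ] A.MQ n) (gG : Y.MG n →ₗ[ℚ] A.MG n),
      (∀ x, A.fEP n (gE x) = gP (Y.fEP n x)) ∧
      (∀ x, A.fEQ n (gE x) = gQ (Y.fEQ n x)) ∧
      (∀ x, A.fPG n (gP x) = gG (Y.fPG n x)) ∧
      (∀ x, A.fQG n (gQ x) = gG (Y.fQG n x)) ∧
      (∀ g x, A.acte n g (gE x) = gE (Y.acte n g x)) ∧
      (∀ g x, A.actP n g (gP x) = gP (Y.actP n g x)) ∧
      (∀ g x, A.actQ n g (gQ x) = gQ (Y.actQ n g x)) ∧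
      (∀ x, gE (i.he n x) = f.he n x) ∧
      (∀ x, gP (i.hP n x) = f.hP n x) ∧
      (∀ x, gQ (i.hQ n x) = f.hQ n x) ∧
      (∀ x, gG (i.hG n x) = f.hG n x) := by
    intro n
    -- Step G
    obtain ⟨rG, hrG⟩ := (i.hG n).exists_leftInverse_of_injective
      (LinearMap.ker_eq_bot.2 (hiG n))
    set gG : Y.MG n →ₗ[ℚ] A.MG n := (f.hG n).comp rG with hgGdef
    have hgG : ∀ x, gG (i.hG n x) = f.hG n x := fun x => by
      simp only [hgGdef, LinearMap.comp_apply]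
      rw [show rG (i.hG n x) = x from DFunLike.congr_fun hrG x]
    -- Step P
    obtain ⟨sP, hsP⟩ := (A.fPG n).exists_rightInverse_of_surjective
      (LinearMap.range_eq_top.2 (hPG n))
    set sP' : A.MG n →ₗ[ℚ] A.MP n :=
      avg (fun _ : ZMod q => LinearMap.id) (A.actP n) sP with hsP'def
    have sP'_inv : ∀ g w, A.actP n g (sP' w) = sP' w := fun g w =>
      (avg_equivariant (fun _ : ZMod q => LinearMap.id) (A.actP n)
        (fun _ _ _ => rfl) (A.actP_add n) sP g w).symm
    have sP'_sec : ∀ w, A.fPG n (sP' w) = w := fun w => by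
      rw [hsP'def, avg_comp_left (aW := fun _ : ZMod q => LinearMap.id) _ _ (A.fPG n)
        (fun g t => A.equivPG n g t) sP w,
        avg_eq_self (fun _ : ZMod q => LinearMap.id) (fun _ : ZMod q => LinearMap.id)
          (fun _ => rfl) (fun _ _ _ => rfl) ((A.fPG n).comp sP) w (fun g => rfl)]
      exact DFunLike.congr_fun hsP w
    set φP : Y.MP n →ₗ[ℚ] A.MP n := sP'.comp (gG.comp (Y.fPG n)) with hφPdef
    have hφP_inv : ∀ g y, A.actP n g (φP y) = φP y := fun g y => sP'_inv g _
    have hφP_drop : ∀ g y, φP (Y.actP n g y) = φP y := fun g y => by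
      simp only [hφPdef, LinearMap.comp_apply, Y.equivPG]
    have hφP_fPG : ∀ y, A.fPG n (φP y) = gG (Y.fPG n y) := fun y => sP'_sec _
    set KP := LinearMap.ker (A.fPG n) with hKPdef
    have hKPstab : ∀ g : ZMod q, ∀ x ∈ KP, A.actP n g x ∈ KP := fun g x hx => by
      simp only [hKPdef, LinearMap.mem_ker, A.equivPG] at hx ⊢; exact hx
    set actKP : ZMod q → ↥KP →ₗ[ℚ] ↥KP := fun g => (A.actP n g).restrict (hKPstab g)
      with hactKPdef
    have actKP_val : ∀ g (x : ↥KP), (actKP g x : A.MP n) = A.actP n g x := fun g x => rfl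
    have actKP_zero : ∀ x, actKP 0 x = x := fun x =>
      Subtype.ext (by rw [actKP_val, A.actP_zero])
    have actKP_add : ∀ g h x, actKP (g + h) x = actKP g (actKP h x) := fun g h x =>
      Subtype.ext (by rw [actKP_val, actKP_val, actKP_val, A.actP_add])
    have hψPmem : ∀ x, ((f.hP n) - φP.comp (i.hP n)) x ∈ KP := fun x => by
      simp only [hKPdef, LinearMap.mem_ker, LinearMap.sub_apply, LinearMap.comp_apply,
        map_sub, f.commPG, hφP_fPG, i.commPG, hgG, sub_self]
    set ψP : X.MP n →ₗ[ℚ] ↥KP :=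
      LinearMap.codRestrict KP ((f.hP n) - φP.comp (i.hP n)) hψPmem with hψPdef
    have hψP_equiv : ∀ (g : ZMod q) x, ψP (X.actP n g x) = actKP g (ψP x) := fun g x => by
      refine Subtype.ext ?_
      rw [actKP_val]
      simp only [hψPdef, LinearMap.codRestrict_apply, LinearMap.sub_apply,
        LinearMap.comp_apply, map_sub]
      rw [← f.actP_comm, ← i.actP_comm, hφP_drop, hφP_inv]
    obtain ⟨ΨP, hΨP_eq, hΨP_i⟩ := extend_equivariant (X.actP n) (Y.actP n) actKP
      (Y.actP_add n) actKP_zero actKP_add (i.hP n) (hiP n)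
      (fun g x => i.actP_comm n g x) ψP hψP_equiv
    set gP : Y.MP n →ₗ[ℚ] A.MP n := φP + KP.subtype.comp ΨP with hgPdef
    have hgP_i : ∀ x, gP (i.hP n x) = f.hP n x := fun x => by
      simp only [hgPdef, LinearMap.add_apply, LinearMap.comp_apply, Submodule.subtype_apply]
      rw [hΨP_i]
      simp only [hψPdef, LinearMap.codRestrict_apply, LinearMap.sub_apply,
        LinearMap.comp_apply]
      abel
    have hgP_fPG : ∀ y, A.fPG n (gP y) = gG (Y.fPG n y) := fun y => by
      simp only [hgPdef, LinearMap.add_apply, LinearMap.comp_apply, Submodule.subtype_apply,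
        map_add, hφP_fPG]
      rw [LinearMap.mem_ker.mp (ΨP y).2, add_zero]
    have hgP_act : ∀ g y, A.actP n g (gP y) = gP (Y.actP n g y) := fun g y => by
      simp only [hgPdef, LinearMap.add_apply, LinearMap.comp_apply, Submodule.subtype_apply,
        map_add, hφP_inv, hφP_drop]
      congr 1
      rw [← actKP_val, ← hΨP_eq]
    -- Step Q
    obtain ⟨sQ, hsQ⟩ := (A.fQG n).exists_rightInverse_of_surjective
      (LinearMap.range_eq_top.2 (hQG n))
    set sQ' : A.MG n →ₗ[ℚ] A.MQ n :=
      avg (fun _ : ZMod p => LinearMap.id) (A.actQ n) sQ with hsQ'def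
    have sQ'_inv : ∀ g w, A.actQ n g (sQ' w) = sQ' w := fun g w =>
      (avg_equivariant (fun _ : ZMod p => LinearMap.id) (A.actQ n)
        (fun _ _ _ => rfl) (A.actQ_add n) sQ g w).symm
    have sQ'_sec : ∀ w, A.fQG n (sQ' w) = w := fun w => by
      rw [hsQ'def, avg_comp_left (aW := fun _ : ZMod p => LinearMap.id) _ _ (A.fQG n)
        (fun g t => A.equivQG n g t) sQ w,
        avg_eq_self (fun _ : ZMod p => LinearMap.id) (fun _ : ZMod p => LinearMap.id)
          (fun _ => rfl) (fun _ _ _ => rfl) ((A.fQG n).comp sQ) w (fun g => rfl)]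
      exact DFunLike.congr_fun hsQ w
    set φQ : Y.MQ n →ₗ[ℚ] A.MQ n := sQ'.comp (gG.comp (Y.fQG n)) with hφQdef
    have hφQ_inv : ∀ g y, A.actQ n g (φQ y) = φQ y := fun g y => sQ'_inv g _
    have hφQ_drop : ∀ g y, φQ (Y.actQ n g y) = φQ y := fun g y => by
      simp only [hφQdef, LinearMap.comp_apply, Y.equivQG]
    have hφQ_fQG : ∀ y, A.fQG n (φQ y) = gG (Y.fQG n y) := fun y => sQ'_sec _
    set KQ := LinearMap.ker (A.fQG n) with hKQdef
    have hKQstab : ∀ g : ZMod p, ∀ x ∈ KQ, A.actQ n g x ∈ KQ := fun g x hx => by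
      simp only [hKQdef, LinearMap.mem_ker, A.equivQG] at hx ⊢; exact hx
    set actKQ : ZMod p → ↥KQ →ₗ[ℚ] ↥KQ := fun g => (A.actQ n g).restrict (hKQstab g)
      with hactKQdef
    have actKQ_val : ∀ g (x : ↥KQ), (actKQ g x : A.MQ n) = A.actQ n g x := fun g x => rfl
    have actKQ_zero : ∀ x, actKQ 0 x = x := fun x =>
      Subtype.ext (by rw [actKQ_val, A.actQ_zero])
    have actKQ_add : ∀ g h x, actKQ (g + h) x = actKQ g (actKQ h x) := fun g h x =>
      Subtype.ext (by rw [actKQ_val, actKQ_val, actKQ_val, A.actQ_add])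
    have hψQmem : ∀ x, ((f.hQ n) - φQ.comp (i.hQ n)) x ∈ KQ := fun x => by
      simp only [hKQdef, LinearMap.mem_ker, LinearMap.sub_apply, LinearMap.comp_apply,
        map_sub, f.commQG, hφQ_fQG, i.commQG, hgG, sub_self]
    set ψQ : X.MQ n →ₗ[ℚ] ↥KQ :=
      LinearMap.codRestrict KQ ((f.hQ n) - φQ.comp (i.hQ n)) hψQmem with hψQdef
    have hψQ_equiv : ∀ (g : ZMod p) x, ψQ (X.actQ n g x) = actKQ g (ψQ x) := fun g x => by
      refine Subtype.ext ?_
      rw [actKQ_val]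
      simp only [hψQdef, LinearMap.codRestrict_apply, LinearMap.sub_apply,
        LinearMap.comp_apply, map_sub]
      rw [← f.actQ_comm, ← i.actQ_comm, hφQ_drop, hφQ_inv]
    obtain ⟨ΨQ, hΨQ_eq, hΨQ_i⟩ := extend_equivariant (X.actQ n) (Y.actQ n) actKQ
      (Y.actQ_add n) actKQ_zero actKQ_add (i.hQ n) (hiQ n)
      (fun g x => i.actQ_comm n g x) ψQ hψQ_equiv
    set gQ : Y.MQ n →ₗ[ℚ] A.MQ n := φQ + KQ.subtype.comp ΨQ with hgQdef
    have hgQ_i : ∀ x, gQ (i.hQ n x) = f.hQ n x := fun x => by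
      simp only [hgQdef, LinearMap.add_apply, LinearMap.comp_apply, Submodule.subtype_apply]
      rw [hΨQ_i]
      simp only [hψQdef, LinearMap.codRestrict_apply, LinearMap.sub_apply,
        LinearMap.comp_apply]
      abel
    have hgQ_fQG : ∀ y, A.fQG n (gQ y) = gG (Y.fQG n y) := fun y => by
      simp only [hgQdef, LinearMap.add_apply, LinearMap.comp_apply, Submodule.subtype_apply,
        map_add, hφQ_fQG]
      rw [LinearMap.mem_ker.mp (ΨQ y).2, add_zero]
    have hgQ_act : ∀ g y, A.actQ n g (gQ y) = gQ (Y.actQ n g y) := fun g y => by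
      simp only [hgQdef, LinearMap.add_apply, LinearMap.comp_apply, Submodule.subtype_apply,
        map_add, hφQ_inv, hφQ_drop]
      congr 1
      rw [← actKQ_val, ← hΨQ_eq]
    -- Step E
    set D : A.MP n × A.MQ n →ₗ[ℚ] A.MG n :=
      (A.fPG n).comp (LinearMap.fst ℚ _ _) - (A.fQG n).comp (LinearMap.snd ℚ _ _) with hDdef
    set Kn := LinearMap.ker D with hKndef
    have hAKmem : ∀ x, ((A.fEP n).prod (A.fEQ n)) x ∈ Kn := fun x => by
      simp only [hKndef, hDdef, LinearMap.mem_ker, LinearMap.sub_apply, LinearMap.comp_apply,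
        LinearMap.prod_apply, Pi.prod, Function.prod, LinearMap.fst_apply, LinearMap.snd_apply,
        A.comm, sub_self]
    set AK : A.Me n →ₗ[ℚ] ↥Kn :=
      LinearMap.codRestrict Kn ((A.fEP n).prod (A.fEQ n)) hAKmem with hAKdef
    have hAKsurj : Surjective AK := by
      rintro ⟨⟨a, b⟩, hab⟩
      simp only [hKndef, hDdef, LinearMap.mem_ker, LinearMap.sub_apply, LinearMap.comp_apply,
        LinearMap.fst_apply, LinearMap.snd_apply, sub_eq_zero] at hab
      obtain ⟨x, hx1, hx2⟩ := hK n a b hab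
      exact ⟨x, Subtype.ext (Prod.ext hx1 hx2)⟩
    obtain ⟨sE, hsE⟩ := AK.exists_rightInverse_of_surjective (LinearMap.range_eq_top.2 hAKsurj)
    have hsE1 : ∀ k, A.fEP n (sE k) = (k : A.MP n × A.MQ n).1 := fun k => by
      have := congrArg (Subtype.val) (DFunLike.congr_fun hsE k)
      simp only [hAKdef, LinearMap.comp_apply, LinearMap.codRestrict_apply, LinearMap.id_apply,
        LinearMap.prod_apply, Pi.prod] at this
      exact congrArg Prod.fst this
    have hsE2 : ∀ k, A.fEQ n (sE k) = (k : A.MP n × A.MQ n).2 := fun k => by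
      have := congrArg (Subtype.val) (DFunLike.congr_fun hsE k)
      simp only [hAKdef, LinearMap.comp_apply, LinearMap.codRestrict_apply, LinearMap.id_apply,
        LinearMap.prod_apply, Pi.prod] at this
      exact congrArg Prod.snd this
    have htmem : ∀ y, ((gP.comp (Y.fEP n)).prod (gQ.comp (Y.fEQ n))) y ∈ Kn := fun y => by
      simp only [hKndef, hDdef, LinearMap.mem_ker, LinearMap.sub_apply, LinearMap.comp_apply,
        LinearMap.prod_apply, Pi.prod, Function.prod, LinearMap.fst_apply, LinearMap.snd_apply,
        hgP_fPG, hgQ_fQG, Y.comm, sub_self]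
    set tmap : Y.Me n →ₗ[ℚ] ↥Kn :=
      LinearMap.codRestrict Kn ((gP.comp (Y.fEP n)).prod (gQ.comp (Y.fEQ n))) htmem with htdef
    set φE : Y.Me n →ₗ[ℚ] A.Me n := avg (Y.acte n) (A.acte n) (sE.comp tmap) with hφEdef
    have hφE_eq : ∀ g y, φE (Y.acte n g y) = A.acte n g (φE y) := fun g y =>
      avg_equivariant _ _ (Y.acte_add n) (A.acte_add n) _ g y
    have hval1 : ∀ y, A.fEP n (sE (tmap y)) = gP (Y.fEP n y) := fun y => by
      rw [hsE1]
      simp only [htdef, LinearMap.codRestrict_apply, LinearMap.prod_apply, Pi.prod, Function.prod,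
        LinearMap.comp_apply]
    have hval2 : ∀ y, A.fEQ n (sE (tmap y)) = gQ (Y.fEQ n y) := fun y => by
      rw [hsE2]
      simp only [htdef, LinearMap.codRestrict_apply, LinearMap.prod_apply, Pi.prod, Function.prod,
        LinearMap.comp_apply]
    have hφE_P : ∀ y, A.fEP n (φE y) = gP (Y.fEP n y) := fun y => by
      rw [hφEdef, avg_comp_left _ _
        (fun g : ZMod (p * q) => A.actP n (ZMod.castHom (dvd_mul_left q p) (ZMod q) g))
        (A.fEP n) (fun g t => A.equivEP n g t) _ y,
        avg_eq_self _ _ (fun x => by rw [map_zero, A.actP_zero])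
          (fun g h x => by rw [map_add, A.actP_add]) _ _ (fun g => ?_)]
      · exact hval1 y
      · show A.fEP n (sE (tmap (Y.acte n g y))) = A.actP n _ (((A.fEP n).comp (sE.comp tmap)) y)
        simp only [LinearMap.comp_apply]
        rw [hval1, Y.equivEP, ← hgP_act, hval1]
    have hφE_Q : ∀ y, A.fEQ n (φE y) = gQ (Y.fEQ n y) := fun y => by
      rw [hφEdef, avg_comp_left _ _
        (fun g : ZMod (p * q) => A.actQ n (ZMod.castHom (dvd_mul_right p q) (ZMod p) g))
        (A.fEQ n) (fun g t => A.equivEQ n g t) _ y,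
        avg_eq_self _ _ (fun x => by rw [map_zero, A.actQ_zero])
          (fun g h x => by rw [map_add, A.actQ_add]) _ _ (fun g => ?_)]
      · exact hval2 y
      · show A.fEQ n (sE (tmap (Y.acte n g y))) = A.actQ n _ (((A.fEQ n).comp (sE.comp tmap)) y)
        simp only [LinearMap.comp_apply]
        rw [hval2, Y.equivEQ, ← hgQ_act, hval2]
    set KE := LinearMap.ker (A.fEP n) ⊓ LinearMap.ker (A.fEQ n) with hKEdef
    have hKEstab : ∀ g : ZMod (p * q), ∀ x ∈ KE, A.acte n g x ∈ KE := fun g x hx => by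
      simp only [hKEdef, Submodule.mem_inf, LinearMap.mem_ker] at hx ⊢
      rw [A.equivEP, A.equivEQ, hx.1, hx.2, map_zero, map_zero]
      exact ⟨rfl, rfl⟩
    set actKE : ZMod (p * q) → ↥KE →ₗ[ℚ] ↥KE := fun g => (A.acte n g).restrict (hKEstab g)
      with hactKEdef
    have actKE_val : ∀ g (x : ↥KE), (actKE g x : A.Me n) = A.acte n g x := fun g x => rfl
    have actKE_zero : ∀ x, actKE 0 x = x := fun x =>
      Subtype.ext (by rw [actKE_val, A.acte_zero])
    have actKE_add : ∀ g h x, actKE (g + h) x = actKE g (actKE h x) := fun g h x =>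
      Subtype.ext (by rw [actKE_val, actKE_val, actKE_val, A.acte_add])
    have hψEmem : ∀ x, ((f.he n) - φE.comp (i.he n)) x ∈ KE := fun x => by
      simp only [hKEdef, Submodule.mem_inf, LinearMap.mem_ker, LinearMap.sub_apply,
        LinearMap.comp_apply, map_sub]
      constructor
      · rw [f.commEP, hφE_P, i.commEP, hgP_i, sub_self]
      · rw [f.commEQ, hφE_Q, i.commEQ, hgQ_i, sub_self]
    set ψE : X.Me n →ₗ[ℚ] ↥KE :=
      LinearMap.codRestrict KE ((f.he n) - φE.comp (i.he n)) hψEmem with hψEdef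
    have hψE_equiv : ∀ (g : ZMod (p * q)) x, ψE (X.acte n g x) = actKE g (ψE x) := fun g x => by
      refine Subtype.ext ?_
      rw [actKE_val]
      simp only [hψEdef, LinearMap.codRestrict_apply, LinearMap.sub_apply,
        LinearMap.comp_apply, map_sub]
      rw [← f.acte_comm, ← i.acte_comm, hφE_eq]
    obtain ⟨ΨE, hΨE_eq, hΨE_i⟩ := extend_equivariant (X.acte n) (Y.acte n) actKE
      (Y.acte_add n) actKE_zero actKE_add (i.he n) (hiE n)
      (fun g x => i.acte_comm n g x) ψE hψE_equiv
    set gE : Y.Me n →ₗ[ℚ] A.Me n := φE + KE.subtype.comp ΨE with hgEdef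
    have hgE_i : ∀ x, gE (i.he n x) = f.he n x := fun x => by
      simp only [hgEdef, LinearMap.add_apply, LinearMap.comp_apply, Submodule.subtype_apply]
      rw [hΨE_i]
      simp only [hψEdef, LinearMap.codRestrict_apply, LinearMap.sub_apply,
        LinearMap.comp_apply]
      abel
    have hgE_P : ∀ y, A.fEP n (gE y) = gP (Y.fEP n y) := fun y => by
      simp only [hgEdef, LinearMap.add_apply, LinearMap.comp_apply, Submodule.subtype_apply,
        map_add, hφE_P]
      rw [LinearMap.mem_ker.mp (Submodule.mem_inf.mp (ΨE y).2).1, add_zero]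
    have hgE_Q : ∀ y, A.fEQ n (gE y) = gQ (Y.fEQ n y) := fun y => by
      simp only [hgEdef, LinearMap.add_apply, LinearMap.comp_apply, Submodule.subtype_apply,
        map_add, hφE_Q]
      rw [LinearMap.mem_ker.mp (Submodule.mem_inf.mp (ΨE y).2).2, add_zero]
    have hgE_act : ∀ g y, A.acte n g (gE y) = gE (Y.acte n g y) := fun g y => by
      simp only [hgEdef, LinearMap.add_apply, LinearMap.comp_apply, Submodule.subtype_apply,
        map_add, ← hφE_eq]
      congr 1
      rw [← actKE_val, ← hΨE_eq]
    exact ⟨gE, gP, gQ, gG, hgE_P, hgE_Q, hgP_fPG, hgQ_fQG, hgE_act, hgP_act, hgQ_act,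
      hgE_i, hgP_i, hgQ_i, hgG⟩
  choose gE gP gQ gG h1 h2 h3 h4 h5 h6 h7 h8 h9 h10 h11 using key
  exact ⟨⟨gE, gP, gQ, gG, fun n => h1 n, fun n => h2 n, fun n => h3 n, fun n => h4 n,
    fun n => h5 n, fun n => h6 n, fun n => h7 n⟩, h8, h9, h10, h11⟩
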